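/- On ℝ⁶ with coordinates (t,x¹,x²,x³,u¹,u²), u² ≠ 0, consider S₁ = span{Φ, ω₀² - (u²/u¹)ω₀¹} where Φ = cos(u¹/u²)((u¹/u²)dx² - dx¹) + u²(dx³ - sin(u¹/u²)dt), ω₀¹ = dx¹ - u¹dt, ω₀² = dx² - u²dt, and u¹ ≠ 0. Then the vector field v₀ = u¹∂_{u¹} + u²∂_{u²} satisfies ((v₀⌟dΦ)) ∧ (ω₀² - (u²/u¹)ω₀¹) ∧ Φ = 0, i.e. v₀⌟dΦ lies in the span of the two generators of S₁. -/

import Mathlib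

noncomputable section

open scoped BigOperators

/-- Coordinates `(t, x¹, x², x³, u¹, u²)` indexed by `0,…,5`. -/
abbrev E6 := Fin 6 → ℝ

def pr6 (i : Fin 6) : E6 →L[ℝ] ℝ := ContinuousLinearMap.proj i

/-- Exterior derivative of a 1-form evaluated on two vectors. -/
def dOne {E : Type*} [NormedAddCommGroup E] [NormedSpace ℝ E]
    (ω : E → E →L[ℝ] ℝ) (x v w : E) : ℝ :=
  fderiv ℝ ω x v w - fderiv ℝ ω x w v

def ω01 : E6 → E6 →L[ℝ] ℝ := fun x => pr6 1 - x 4 • pr6 0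
def ω02 : E6 → E6 →L[ℝ] ℝ := fun x => pr6 2 - x 5 • pr6 0

/-- `Φ = cos(u¹/u²)((u¹/u²)dx² - dx¹) + u²(dx³ - sin(u¹/u²)dt)`. -/
def Φ : E6 → E6 →L[ℝ] ℝ := fun x =>
  Real.cos (x 4 / x 5) • ((x 4 / x 5) • pr6 2 - pr6 1) +
    x 5 • (pr6 3 - Real.sin (x 4 / x 5) • pr6 0)

/-- The second generator of `S₁`: `ω₀² - (u²/u¹)ω₀¹`. -/
def ω12' : E6 → E6 →L[ℝ] ℝ := fun x => ω02 x - (x 5 / x 4) • ω01 x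

/-- `v₀ = u¹∂_{u¹} + u²∂_{u²}`. -/
def v0 : E6 → E6 := fun x => Pi.single 4 (x 4) + Pi.single 5 (x 5)

/-- Wedge of three covectors (as functions) evaluated on three vectors. -/
def wedge3 (f g h : E6 → ℝ) (v : Fin 3 → E6) : ℝ :=
  ∑ σ : Equiv.Perm (Fin 3), ((Equiv.Perm.sign σ : ℤ) : ℝ) *
    f (v (σ 0)) * g (v (σ 1)) * h (v (σ 2))


lemma wedge3_eq_det (f g h : E6 → ℝ) (v : Fin 3 → E6) :
    wedge3 f g h v = (Matrix.of fun j i : Fin 3 => ![f, g, h] i (v j)).det := by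
  rw [Matrix.det_apply, wedge3]
  refine Finset.sum_congr rfl fun σ _ => ?_
  rw [Fin.prod_univ_three]
  simp [Units.smul_def]
  ring

lemma wedge3_comb (g h : E6 → ℝ) (a b : ℝ) (v : Fin 3 → E6) :
    wedge3 (fun w => a * g w + b * h w) g h v = 0 := by
  rw [wedge3_eq_det, Matrix.det_fin_three]
  simp [Matrix.of_apply]
  ring

lemma hasFDerivAt_s (x : E6) (h5 : x 5 ≠ 0) :
    HasFDerivAt (fun y : E6 => y 4 / y 5)
      ((x 5)⁻¹ • pr6 4 - (x 4 / x 5 ^ 2) • pr6 5) x := by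
  have h := (pr6 4).hasFDerivAt.mul
    ((hasFDerivAt_inv h5).comp x ((pr6 5).hasFDerivAt (x := x)))
  simp only [div_eq_mul_inv]
  refine h.congr_fderiv ?_
  ext w
  simp [pr6, Function.comp]
  ring

lemma dOne_key (x : E6) (h4 : x 4 ≠ 0) (h5 : x 5 ≠ 0) (w : E6) :
    dOne Φ x (v0 x) w
      = (-(x 4 / x 5 * Real.cos (x 4 / x 5))) * ω12' x w + 1 * Φ x w := by
  set Ds : E6 →L[ℝ] ℝ := (x 5)⁻¹ • pr6 4 - (x 4 / x 5 ^ 2) • pr6 5 with hDs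
  have hs := hasFDerivAt_s x h5
  have hA := hs.cos.smul ((hs.smul_const (pr6 2)).sub (hasFDerivAt_const (pr6 1) x))
  have hB := ((pr6 5).hasFDerivAt (x := x)).smul
      ((hasFDerivAt_const (pr6 3) x).sub (hs.sin.smul_const (pr6 0)))
  have hΦ : HasFDerivAt Φ
      ((Real.cos (x 4 / x 5) • (Ds.smulRight (pr6 2) - 0) +
        (-Real.sin (x 4 / x 5) • Ds).smulRight ((x 4 / x 5) • pr6 2 - pr6 1)) +
       (x 5 • (0 - (Real.cos (x 4 / x 5) • Ds).smulRight (pr6 0)) +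
        (pr6 5).smulRight (pr6 3 - Real.sin (x 4 / x 5) • pr6 0))) x := hA.add hB
  have hv4 : v0 x 4 = x 4 := by simp [v0]
  have hv5 : v0 x 5 = x 5 := by simp [v0]
  have hv0 : v0 x 0 = 0 := by simp [v0, Pi.single_apply]
  have hv1 : v0 x 1 = 0 := by simp [v0, Pi.single_apply]
  have hv2 : v0 x 2 = 0 := by simp [v0, Pi.single_apply]
  have hv3 : v0 x 3 = 0 := by simp [v0, Pi.single_apply]
  have hDsv : Ds (v0 x) = 0 := by
    simp [hDs, pr6, hv4, hv5]
    field_simp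
    ring
  rw [dOne, hΦ.fderiv]
  simp only [ContinuousLinearMap.add_apply, ContinuousLinearMap.smul_apply,
    ContinuousLinearMap.sub_apply, ContinuousLinearMap.smulRight_apply,
    ContinuousLinearMap.zero_apply, pr6, ContinuousLinearMap.proj_apply,
    smul_eq_mul, hv0, hv1, hv2, hv3, hv4, hv5, hDsv]
  simp only [ω12', ω02, ω01, Φ, ContinuousLinearMap.add_apply,
    ContinuousLinearMap.smul_apply, ContinuousLinearMap.sub_apply, pr6,
    ContinuousLinearMap.proj_apply, smul_eq_mul]
  field_simp
  ring

/-- On `u¹ ≠ 0`, `u² ≠ 0` one has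
`(v₀⌟dΦ) ∧ (ω₀² - (u²/u¹)ω₀¹) ∧ Φ = 0`, i.e. `v₀⌟dΦ` lies pointwise in the
span of the two generators of `S₁ = span{Φ, ω₀² - (u²/u¹)ω₀¹}`. -/
theorem v0_contraction_in_S1 :
    ∀ x : E6, x 4 ≠ 0 → x 5 ≠ 0 →
      (∀ v : Fin 3 → E6,
        wedge3 (fun w => dOne Φ x (v0 x) w) (⇑(ω12' x)) (⇑(Φ x)) v = 0) ∧
      (∃ a b : ℝ, ∀ w : E6,
        dOne Φ x (v0 x) w = a * ω12' x w + b * Φ x w) := by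
  intro x h4 h5
  have key := dOne_key x h4 h5
  constructor
  · intro v
    have hf : (fun w => dOne Φ x (v0 x) w)
        = fun w => (-(x 4 / x 5 * Real.cos (x 4 / x 5))) * ω12' x w + 1 * Φ x w :=
      funext key
    rw [hf]
    exact wedge3_comb _ _ _ _ v
  · exact ⟨_, 1, key⟩
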